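/- Improved speed limit for states: under the same master-equation decomposition dρ_t/dt = −(i/ℏ)[H+H_D, ρ_t] + D_d[ρ_t], the trace-norm speed satisfies ‖dρ_t/dt‖_Tr ≤ (1/(2ℏ))√(F_{ρ_t}(H+H_D)) + √((1/2)·σ̇·M'), where M' := ∑_{ω,α,n≠m} f(W^{ω,α}_{mn}p_n, W^{−ω,α}_{nm}p_m) and ‖Y‖_Tr := (1/2)Tr√(Y†Y). -/

import Mathlib

open scoped ComplexOrder

/-- The logarithmic mean, with `logMean a a = a`. -/
noncomputable def logMean (a b : ℝ) : ℝ :=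
  if a = b then a else (a - b) / (Real.log a - Real.log b)

/-- `Matrix.PosSemidef.sqrt` as it was defined in Mathlib (Dec 2024); removed since. -/
noncomputable def Matrix.PosSemidef.sqrt {n 𝕜 : Type*} [Fintype n] [RCLike 𝕜] [DecidableEq n]
    {A : Matrix n n 𝕜} (hA : A.PosSemidef) : Matrix n n 𝕜 :=
  hA.1.eigenvectorUnitary.1 * Matrix.diagonal ((↑) ∘ (√·) ∘ hA.1.eigenvalues) *
    (star hA.1.eigenvectorUnitary : Matrix n n 𝕜)

open Matrix in
/-- SLD Fisher information in the eigenbasis of `ρ = ∑ p i |i⟩⟨i|`. -/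
noncomputable def sldFisher {d : ℕ} (p : Fin d → ℝ) (H : Matrix (Fin d) (Fin d) ℂ) : ℝ :=
  ∑ i, ∑ j, 2 * (p i - p j) ^ 2 / (p i + p j) * Complex.normSq (H i j)

section Aux
open Matrix

variable {d : ℕ}

lemma conj_mul_conj (U : Matrix (Fin d) (Fin d) ℂ) (hU : U ∈ Matrix.unitaryGroup (Fin d) ℂ)
    (D E : Fin d → ℂ) :
    (U * diagonal D * star U) * (U * diagonal E * star U)
      = U * diagonal (fun i => D i * E i) * star U := by
  have h1 : star U * U = 1 := (mem_unitaryGroup_iff').mp hU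
  calc (U * diagonal D * star U) * (U * diagonal E * star U)
      = U * (diagonal D * ((star U * U) * diagonal E)) * star U := by
        simp only [Matrix.mul_assoc]
    _ = U * diagonal (fun i => D i * E i) * star U := by
        rw [h1, Matrix.one_mul, diagonal_mul_diagonal, Matrix.mul_assoc]

lemma trace_conj (U : Matrix (Fin d) (Fin d) ℂ) (hU : U ∈ Matrix.unitaryGroup (Fin d) ℂ)
    (D : Fin d → ℂ) :
    (U * diagonal D * star U).trace = ∑ i, D i := by
  rw [trace_mul_cycle, (mem_unitaryGroup_iff').mp hU, Matrix.one_mul, trace_diagonal]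

lemma sqrt_eq_abs (B : Matrix (Fin d) (Fin d) ℂ) (hB : B.IsHermitian) :
    (Matrix.posSemidef_conjTranspose_mul_self B).sqrt
      = (hB.eigenvectorUnitary : Matrix (Fin d) (Fin d) ℂ)
        * diagonal (fun i => ((|hB.eigenvalues i| : ℝ) : ℂ))
        * star (hB.eigenvectorUnitary : Matrix (Fin d) (Fin d) ℂ) := by
  have hsa : IsSelfAdjoint B := hB
  have h1 : (Matrix.posSemidef_conjTranspose_mul_self B).sqrt = cfc Real.sqrt (Bᴴ * B) := by
    rw [(Matrix.posSemidef_conjTranspose_mul_self B).1.cfc_eq]; rfl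
  have h2 : (hB.eigenvectorUnitary : Matrix (Fin d) (Fin d) ℂ)
        * diagonal (fun i => ((|hB.eigenvalues i| : ℝ) : ℂ))
        * star (hB.eigenvectorUnitary : Matrix (Fin d) (Fin d) ℂ)
        = cfc (fun x : ℝ => |x|) B := by
    rw [hB.cfc_eq]; rfl
  have h3 : Bᴴ * B = cfc (fun x : ℝ => x * x) B := by
    rw [cfc_mul (fun x : ℝ => x) (fun x : ℝ => x) B, cfc_id' (R := ℝ) (a := B), hB.eq]
  rw [h1, h2, h3, ← cfc_comp Real.sqrt (fun x : ℝ => x * x) B]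
  congr 1
  funext x
  exact Real.sqrt_mul_self_eq_abs x

noncomputable def sgnX (B : Matrix (Fin d) (Fin d) ℂ) (hB : B.IsHermitian) :
    Matrix (Fin d) (Fin d) ℂ :=
  (hB.eigenvectorUnitary : Matrix (Fin d) (Fin d) ℂ)
    * diagonal (fun i => (((if hB.eigenvalues i < 0 then (-1:ℝ) else 1) : ℝ) : ℂ))
    * star (hB.eigenvectorUnitary : Matrix (Fin d) (Fin d) ℂ)

lemma sgnX_conjTranspose (B : Matrix (Fin d) (Fin d) ℂ) (hB : B.IsHermitian) :
    (sgnX B hB)ᴴ = sgnX B hB := by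
  unfold sgnX
  rw [conjTranspose_mul, conjTranspose_mul, diagonal_conjTranspose]
  rw [star_eq_conjTranspose, conjTranspose_conjTranspose]
  simp only [Matrix.mul_assoc]
  have hf : (star fun i => (((if hB.eigenvalues i < 0 then (-1:ℝ) else 1) : ℝ) : ℂ))
      = fun i => (((if hB.eigenvalues i < 0 then (-1:ℝ) else 1) : ℝ) : ℂ) := by
    funext i
    exact Complex.conj_ofReal _
  rw [hf]

lemma sgnX_mul_self (B : Matrix (Fin d) (Fin d) ℂ) (hB : B.IsHermitian) :
    sgnX B hB * sgnX B hB = 1 := by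
  unfold sgnX
  rw [conj_mul_conj _ hB.eigenvectorUnitary.2]
  have : (fun i => (((if hB.eigenvalues i < 0 then (-1:ℝ) else 1) : ℝ) : ℂ)
      * (((if hB.eigenvalues i < 0 then (-1:ℝ) else 1) : ℝ) : ℂ)) = fun _ => (1 : ℂ) := by
    funext i
    split <;> norm_num
  rw [this, diagonal_one, Matrix.mul_one]
  exact (mem_unitaryGroup_iff).mp hB.eigenvectorUnitary.2

lemma sgnX_row (B : Matrix (Fin d) (Fin d) ℂ) (hB : B.IsHermitian) (m : Fin d) :
    ∑ n, Complex.normSq (sgnX B hB m n) = 1 := by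
  have h1 : (sgnX B hB * (sgnX B hB)ᴴ) m m = 1 := by
    rw [sgnX_conjTranspose, sgnX_mul_self]
    simp
  have h2 : (sgnX B hB * (sgnX B hB)ᴴ) m m
      = ∑ n, (Complex.normSq (sgnX B hB m n) : ℂ) := by
    rw [Matrix.mul_apply]
    congr 1
    funext n
    rw [conjTranspose_apply, Complex.star_def, Complex.mul_conj]
  have := h1 ▸ h2
  have := congrArg Complex.re this.symm
  simpa using this

lemma sgnX_col (B : Matrix (Fin d) (Fin d) ℂ) (hB : B.IsHermitian) (m : Fin d) :
    ∑ n, Complex.normSq (sgnX B hB n m) = 1 := by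
  have h1 : ((sgnX B hB)ᴴ * sgnX B hB) m m = 1 := by
    rw [sgnX_conjTranspose, sgnX_mul_self]
    simp
  have h2 : ((sgnX B hB)ᴴ * sgnX B hB) m m
      = ∑ n, (Complex.normSq (sgnX B hB n m) : ℂ) := by
    rw [Matrix.mul_apply]
    congr 1
    funext n
    rw [conjTranspose_apply, mul_comm, Complex.star_def, Complex.mul_conj]
  have := h1 ▸ h2
  have := congrArg Complex.re this.symm
  simpa using this

lemma trace_sgnX_mul (B : Matrix (Fin d) (Fin d) ℂ) (hB : B.IsHermitian) :
    (sgnX B hB * B).trace = ((∑ i, |hB.eigenvalues i| : ℝ) : ℂ) := by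
  have h := congrArg (fun M => (sgnX B hB * M).trace) hB.spectral_theorem
  rw [Unitary.conjStarAlgAut_apply] at h
  rw [h]
  unfold sgnX
  rw [conj_mul_conj _ hB.eigenvectorUnitary.2, trace_conj _ hB.eigenvectorUnitary.2]
  push_cast
  congr 1
  funext i
  simp only [Function.comp_apply]
  have hco : ((RCLike.ofReal (hB.eigenvalues i)) : ℂ)
      = ((hB.eigenvalues i : ℝ) : ℂ) := rfl
  rw [hco, ← Complex.ofReal_mul]
  congr 1
  rcases lt_or_ge (hB.eigenvalues i) 0 with h | h
  · simp [h, abs_of_neg h]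
  · simp [not_lt.mpr h, abs_of_nonneg h]

lemma log_sub_ne_zero {a b : ℝ} (ha : 0 < a) (hb : 0 < b) (hab : a ≠ b) :
    Real.log a - Real.log b ≠ 0 := by
  intro h
  exact hab (Real.log_injOn_pos (Set.mem_Ioi.2 ha) (Set.mem_Ioi.2 hb) (by linarith))

lemma logMean_pos {a b : ℝ} (ha : 0 < a) (hb : 0 < b) : 0 < logMean a b := by
  unfold logMean
  split
  · exact ha
  · rename_i hab
    rcases lt_or_gt_of_ne hab with h | h
    · have hl : Real.log a < Real.log b := (Real.log_lt_log_iff ha hb).mpr h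
      exact div_pos_of_neg_of_neg (by linarith) (by linarith)
    · have hl : Real.log b < Real.log a := (Real.log_lt_log_iff hb ha).mpr h
      exact div_pos (by linarith) (by linarith)

lemma logMean_mul_eq {a b : ℝ} (ha : 0 < a) (hb : 0 < b) :
    logMean a b * ((a - b) * (Real.log a - Real.log b)) = (a - b) ^ 2 := by
  unfold logMean
  split
  · rename_i h
    simp [h]
  · rename_i hab
    have hΔ := log_sub_ne_zero ha hb hab
    field_simp

lemma sub_mul_log_sub_nonneg {a b : ℝ} (ha : 0 < a) (hb : 0 < b) :
    0 ≤ (a - b) * (Real.log a - Real.log b) := by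
  rcases le_total a b with h | h
  · have := Real.log_le_log ha h
    nlinarith
  · have := Real.log_le_log hb h
    nlinarith

lemma two_log_identity {a b : ℝ} (ha : 0 < a) (hb : 0 < b) :
    a * Real.log (a / b) + b * Real.log (b / a)
      = (a - b) * (Real.log a - Real.log b) := by
  rw [Real.log_div ha.ne' hb.ne', Real.log_div hb.ne' ha.ne']
  ring

lemma sum_mul_le_sqrt_mul_sqrt {α : Type*} [Fintype α] (u v : α → ℝ) :
    ∑ t, u t * v t ≤ Real.sqrt (∑ t, u t ^ 2) * Real.sqrt (∑ t, v t ^ 2) := by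
  rcases le_or_gt (∑ t, u t * v t) 0 with h | h
  · exact h.trans (by positivity)
  · have h2 := Finset.sum_mul_sq_le_sq_mul_sq Finset.univ u v
    calc ∑ t, u t * v t = Real.sqrt ((∑ t, u t * v t) ^ 2) := (Real.sqrt_sq h.le).symm
      _ ≤ Real.sqrt ((∑ t, u t ^ 2) * (∑ t, v t ^ 2)) := Real.sqrt_le_sqrt h2
      _ = _ := Real.sqrt_mul (by positivity) _

section Classical

variable {J : Type} [Fintype J] {d : ℕ}

lemma triple_eq (f : J → Fin d → Fin d → ℝ) :
    ∑ j, ∑ n, ∑ m, f j n m = ∑ t : J × Fin d × Fin d, f t.1 t.2.1 t.2.2 := by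
  rw [Fintype.sum_prod_type]
  congr 1
  funext j
  rw [Fintype.sum_prod_type]

lemma sigma_double (p : Fin d → ℝ) (hp : ∀ i, 0 < p i)
    (ι : J → J) (hι : ∀ j, ι (ι j) = j)
    (W : J → Fin d → Fin d → ℝ) (hW : ∀ j m n, 0 < W j m n) :
    2 * (∑ j, ∑ n, ∑ m, if m = n then 0
        else W j m n * p n * Real.log (W j m n * p n / (W (ι j) n m * p m)))
      = ∑ j, ∑ n, ∑ m, if m = n then 0 else
          (W j m n * p n - W (ι j) n m * p m)
            * (Real.log (W j m n * p n) - Real.log (W (ι j) n m * p m)) := by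
  rw [triple_eq, triple_eq]
  set g : J × Fin d × Fin d → J × Fin d × Fin d := fun t => (ι t.1, t.2.2, t.2.1) with hg
  have hginv : Function.Involutive g := by
    rintro ⟨j, n, m⟩
    simp [hg, hι]
  set e := hginv.toPerm with he
  have hswap : (∑ t : J × Fin d × Fin d, if t.2.2 = t.2.1 then 0
      else W t.1 t.2.2 t.2.1 * p t.2.1
        * Real.log (W t.1 t.2.2 t.2.1 * p t.2.1 / (W (ι t.1) t.2.1 t.2.2 * p t.2.2)))
      = ∑ t : J × Fin d × Fin d, if t.2.2 = t.2.1 then 0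
      else W (ι t.1) t.2.1 t.2.2 * p t.2.2
        * Real.log (W (ι t.1) t.2.1 t.2.2 * p t.2.2 / (W t.1 t.2.2 t.2.1 * p t.2.1)) := by
    refine Fintype.sum_equiv e _ _ ?_
    rintro ⟨j, n, m⟩
    have : e (j, n, m) = (ι j, m, n) := rfl
    rw [this]
    simp only [hι]
    by_cases h : n = m
    · simp [h]
    · rw [if_neg h, if_neg (fun hh => h hh.symm)]
  rw [two_mul]
  nth_rewrite 2 [hswap]
  rw [← Finset.sum_add_distrib]
  apply Finset.sum_congr rfl
  rintro ⟨j, n, m⟩ -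
  by_cases h : m = n
  · simp [h]
  · simp only [if_neg h]
    exact two_log_identity (mul_pos (hW _ _ _) (hp _)) (mul_pos (hW _ _ _) (hp _))

lemma sigma_nonneg (p : Fin d → ℝ) (hp : ∀ i, 0 < p i)
    (ι : J → J) (hι : ∀ j, ι (ι j) = j)
    (W : J → Fin d → Fin d → ℝ) (hW : ∀ j m n, 0 < W j m n) :
    0 ≤ ∑ j, ∑ n, ∑ m, if m = n then 0
        else W j m n * p n * Real.log (W j m n * p n / (W (ι j) n m * p m)) := by
  have h := sigma_double p hp ι hι W hW
  have hrhs : 0 ≤ ∑ j, ∑ n, ∑ m : Fin d, if m = n then 0 else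
      (W j m n * p n - W (ι j) n m * p m)
        * (Real.log (W j m n * p n) - Real.log (W (ι j) n m * p m)) := by
    refine Finset.sum_nonneg fun j _ => Finset.sum_nonneg fun n _ =>
      Finset.sum_nonneg fun m _ => ?_
    by_cases h' : m = n
    · simp [h']
    · rw [if_neg h']
      exact sub_mul_log_sub_nonneg (mul_pos (hW _ _ _) (hp _)) (mul_pos (hW _ _ _) (hp _))
  linarith

lemma Mprime_nonneg (p : Fin d → ℝ) (hp : ∀ i, 0 < p i)
    (ι : J → J) (W : J → Fin d → Fin d → ℝ) (hW : ∀ j m n, 0 < W j m n) :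
    0 ≤ ∑ j, ∑ n, ∑ m : Fin d, if n = m then 0
        else logMean (W j m n * p n) (W (ι j) n m * p m) := by
  refine Finset.sum_nonneg fun j _ => Finset.sum_nonneg fun n _ =>
    Finset.sum_nonneg fun m _ => ?_
  by_cases h' : n = m
  · simp [h']
  · rw [if_neg h']
    exact (logMean_pos (mul_pos (hW _ _ _) (hp _)) (mul_pos (hW _ _ _) (hp _))).le

lemma dissipative_bound (p : Fin d → ℝ) (hp : ∀ i, 0 < p i)
    (ι : J → J) (hι : ∀ j, ι (ι j) = j)
    (W : J → Fin d → Fin d → ℝ) (hW : ∀ j m n, 0 < W j m n) :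
    ∑ j, ∑ n, ∑ m, (if n = m then 0 else |W j m n * p n - W (ι j) n m * p m|)
      ≤ Real.sqrt (∑ j, ∑ n, ∑ m, if n = m then 0
            else logMean (W j m n * p n) (W (ι j) n m * p m))
        * Real.sqrt (2 * ∑ j, ∑ n, ∑ m, if m = n then 0
            else W j m n * p n * Real.log (W j m n * p n / (W (ι j) n m * p m))) := by
  rw [sigma_double p hp ι hι W hW]
  rw [triple_eq, triple_eq, triple_eq]
  set A : J × Fin d × Fin d → ℝ := fun t => W t.1 t.2.2 t.2.1 * p t.2.1 with hA
  set B : J × Fin d × Fin d → ℝ := fun t => W (ι t.1) t.2.1 t.2.2 * p t.2.2 with hB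
  have hApos : ∀ t, 0 < A t := fun t => mul_pos (hW _ _ _) (hp _)
  have hBpos : ∀ t, 0 < B t := fun t => mul_pos (hW _ _ _) (hp _)
  set u : J × Fin d × Fin d → ℝ := fun t =>
    Real.sqrt (if t.2.1 = t.2.2 then 0 else logMean (A t) (B t)) with hu
  set v : J × Fin d × Fin d → ℝ := fun t =>
    Real.sqrt (if t.2.2 = t.2.1 then 0
      else (A t - B t) * (Real.log (A t) - Real.log (B t))) with hv
  have huv : ∀ t, (if t.2.1 = t.2.2 then 0 else |A t - B t|) = u t * v t := by
    intro t
    by_cases h : t.2.1 = t.2.2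
    · simp [hu, hv, h]
    · rw [if_neg h, hu, hv]
      simp only
      rw [if_neg h, if_neg (fun hh => h hh.symm), ← Real.sqrt_mul
        (logMean_pos (hApos t) (hBpos t)).le, logMean_mul_eq (hApos t) (hBpos t),
        Real.sqrt_sq_eq_abs]
  calc ∑ t : J × Fin d × Fin d, (if t.2.1 = t.2.2 then 0 else |A t - B t|)
      = ∑ t : J × Fin d × Fin d, u t * v t := by
        exact Finset.sum_congr rfl fun t _ => huv t
    _ ≤ Real.sqrt (∑ t, u t ^ 2) * Real.sqrt (∑ t, v t ^ 2) :=
        sum_mul_le_sqrt_mul_sqrt _ _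
    _ = _ := by
        congr 1
        · congr 1
          refine Finset.sum_congr rfl fun t _ => ?_
          rw [hu]
          simp only
          rw [Real.sq_sqrt]
          by_cases h : t.2.1 = t.2.2
          · simp [h]
          · rw [if_neg h]
            exact (logMean_pos (hApos t) (hBpos t)).le
        · congr 1
          refine Finset.sum_congr rfl fun t _ => ?_
          rw [hv]
          simp only
          rw [Real.sq_sqrt]
          by_cases h : t.2.2 = t.2.1
          · simp [h]
          · rw [if_neg h]
            exact sub_mul_log_sub_nonneg (hApos t) (hBpos t)

end Classical


end Aux

open Matrix in
/-- Improved speed limit for states: with the master-equation decomposition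
`dρ_t/dt = −(i/ℏ)[H+H_D,ρ_t] + D_d[ρ_t]` (same setup as the current speed
limit, in the eigenbasis `ρ_t = diagonal p`), the trace-norm speed
`‖dρ_t/dt‖_Tr = (1/2)Tr√((dρ_t/dt)†(dρ_t/dt))` satisfies
`‖dρ_t/dt‖_Tr ≤ (1/(2ℏ))√(F_{ρ_t}(H+H_D)) + √(σ̇ M'/2)`. -/
theorem improved_state_speed_limit {d : ℕ} (p : Fin d → ℝ)
    (hp : ∀ i, 0 < p i) (hsum : ∑ i, p i = 1) (hnd : Function.Injective p)
    (J : Type) [Fintype J] (ι : J → J) (hι : ∀ j, ι (ι j) = j)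
    (W : J → Fin d → Fin d → ℝ) (hW : ∀ j m n, 0 < W j m n)
    (H HD : Matrix (Fin d) (Fin d) ℂ)
    (hH : H.IsHermitian) (hHD : HD.IsHermitian)
    (ℏ : ℝ) (hℏ : 0 < ℏ) :
    let ρ : Matrix (Fin d) (Fin d) ℂ := Matrix.diagonal fun n => (p n : ℂ)
    let Dd : Matrix (Fin d) (Fin d) ℂ := Matrix.diagonal fun m =>
      ((∑ j, ∑ n, if n = m then 0 else (W j m n * p n - W (ι j) n m * p m) : ℝ) : ℂ)
    let ρ' : Matrix (Fin d) (Fin d) ℂ :=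
      (-(Complex.I / (ℏ : ℂ))) • ((H + HD) * ρ - ρ * (H + HD)) + Dd
    let σdot : ℝ := ∑ j, ∑ n, ∑ m,
      if m = n then 0
      else W j m n * p n * Real.log (W j m n * p n / (W (ι j) n m * p m))
    let M' : ℝ := ∑ j, ∑ n, ∑ m,
      if n = m then 0 else logMean (W j m n * p n) (W (ι j) n m * p m)
    (1 / 2) * (((Matrix.posSemidef_conjTranspose_mul_self ρ').sqrt).trace).re ≤
      (1 / (2 * ℏ)) * Real.sqrt (sldFisher p (H + HD)) +
        Real.sqrt ((1 / 2) * σdot * M') := by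
  intro ρ Dd ρ' σdot M'
  have hρdef : ρ = Matrix.diagonal (fun n => ((p n : ℝ) : ℂ)) := rfl
  set Ddr : Fin d → ℝ := fun m =>
    ∑ j, ∑ n, if n = m then 0 else (W j m n * p n - W (ι j) n m * p m) with hDdr
  have hDddef : Dd = Matrix.diagonal (fun m => ((Ddr m : ℝ) : ℂ)) := rfl
  set K := H + HD with hKdef
  set c : ℂ := -(Complex.I / (ℏ : ℂ)) with hcdef
  have hK : K.IsHermitian := hH.add hHD
  have hρH : ρ.IsHermitian := by
    rw [hρdef]
    exact Matrix.isHermitian_diagonal_of_self_adjoint _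
      (funext fun n => Complex.conj_ofReal _)
  have hDdH : Dd.IsHermitian := by
    rw [hDddef]
    exact Matrix.isHermitian_diagonal_of_self_adjoint _
      (funext fun n => Complex.conj_ofReal _)
  have hcstar : star c = -c := by
    rw [hcdef]
    simp [Complex.star_def, map_div₀, Complex.conj_ofReal]
    ring
  have hAH : (c • (K * ρ - ρ * K)).IsHermitian := by
    have h1 : (K * ρ - ρ * K)ᴴ = -(K * ρ - ρ * K) := by
      rw [conjTranspose_sub, conjTranspose_mul, conjTranspose_mul, hK.eq, hρH.eq, neg_sub]
    show _ᴴ = _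
    rw [conjTranspose_smul, h1, hcstar, smul_neg, neg_smul, neg_neg]
  have hρ'H : ρ'.IsHermitian := hAH.add hDdH
  -- eigenvalue identification of LHS
  have hLHS : (((Matrix.posSemidef_conjTranspose_mul_self ρ').sqrt).trace).re
      = ∑ i, |hρ'H.eigenvalues i| := by
    rw [sqrt_eq_abs ρ' hρ'H, trace_conj _ hρ'H.eigenvectorUnitary.2, ← Complex.ofReal_sum,
      Complex.ofReal_re]
  set X := sgnX ρ' hρ'H with hXdef
  have htr : ((X * ρ').trace).re = ∑ i, |hρ'H.eigenvalues i| := by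
    rw [trace_sgnX_mul ρ' hρ'H, Complex.ofReal_re]
  have hsplit : (X * ρ').trace
      = (X * (c • (K * ρ - ρ * K))).trace + (X * Dd).trace := by
    rw [← trace_add, ← Matrix.mul_add]
  -- entry formula for the commutator part
  have hAentry : ∀ n m : Fin d, (c • (K * ρ - ρ * K)) n m
      = c * K n m * (((p m : ℝ) : ℂ) - ((p n : ℝ) : ℂ)) := by
    intro n m
    rw [hρdef]
    simp only [Matrix.smul_apply, Matrix.sub_apply, Matrix.mul_diagonal, Matrix.diagonal_mul,
      smul_eq_mul]
    ring
  have htrA : (X * (c • (K * ρ - ρ * K))).trace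
      = ∑ m, ∑ n, X m n * (c * K n m * (((p m : ℝ) : ℂ) - ((p n : ℝ) : ℂ))) := by
    simp only [Matrix.trace, Matrix.diag, Matrix.mul_apply]
    exact Finset.sum_congr rfl fun m _ => Finset.sum_congr rfl fun n _ => by rw [hAentry]
  have habs_c : ‖c‖ = 1 / ℏ := by
    rw [hcdef, norm_neg, norm_div, Complex.norm_I, Complex.norm_real, Real.norm_eq_abs, abs_of_pos hℏ]
  have hF : 0 ≤ sldFisher p K := by
    refine Finset.sum_nonneg fun i _ => Finset.sum_nonneg fun j _ => ?_
    refine mul_nonneg (div_nonneg (by positivity) ?_) (Complex.normSq_nonneg _)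
    have := hp i; have := hp j; linarith
  have hKsym : ∀ m n : Fin d, Complex.normSq (K n m) = Complex.normSq (K m n) := by
    intro m n
    have h := congrFun (congrFun hK.eq n) m
    rw [conjTranspose_apply] at h
    rw [← h, Complex.star_def, Complex.normSq_conj]
  -- bound 1
  have hb1 : ‖(X * (c • (K * ρ - ρ * K))).trace‖
      ≤ Real.sqrt (sldFisher p K) / ℏ := by
    rw [htrA]
    set u : Fin d × Fin d → ℝ := fun q =>
      ‖X q.1 q.2‖ * Real.sqrt (p q.1 + p q.2) with hu
    set v : Fin d × Fin d → ℝ := fun q =>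
      |p q.1 - p q.2| / Real.sqrt (p q.1 + p q.2) * ‖K q.2 q.1‖ / ℏ with hv
    have hspos : ∀ q : Fin d × Fin d, 0 < p q.1 + p q.2 := fun q => by
      have := hp q.1; have := hp q.2; linarith
    have step1 : ‖∑ m, ∑ n, X m n
          * (c * K n m * (((p m : ℝ) : ℂ) - ((p n : ℝ) : ℂ)))‖
        ≤ ∑ q : Fin d × Fin d, u q * v q := by
      rw [Fintype.sum_prod_type]
      refine (norm_sum_le _ _).trans ?_
      refine Finset.sum_le_sum fun m _ => ?_
      refine (norm_sum_le _ _).trans ?_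
      refine Finset.sum_le_sum fun n _ => ?_
      rw [norm_mul, norm_mul, norm_mul, habs_c]
      have hΔ : ‖((p m : ℝ) : ℂ) - ((p n : ℝ) : ℂ)‖ = |p m - p n| := by
        rw [← Complex.ofReal_sub, Complex.norm_real, Real.norm_eq_abs]
      rw [hΔ]
      have hsq : Real.sqrt (p m + p n) ≠ 0 :=
        (Real.sqrt_pos.mpr (hspos (m, n))).ne'
      have huvq : u (m, n) * v (m, n)
          = ‖X m n‖ * (1 / ℏ * ‖K n m‖ * |p m - p n|) := by
        rw [hu, hv]
        simp only
        field_simp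
        try rw [mul_assoc, mul_inv_cancel₀ hsq, mul_one]
      rw [huvq]
    refine step1.trans ?_
    have hu2 : ∑ q : Fin d × Fin d, u q ^ 2 = 2 := by
      have hterm : ∀ q : Fin d × Fin d, u q ^ 2
          = Complex.normSq (X q.1 q.2) * (p q.1 + p q.2) := by
        intro q
        rw [hu]
        simp only
        rw [mul_pow, Complex.sq_norm, Real.sq_sqrt (hspos q).le]
      rw [Finset.sum_congr rfl fun q _ => hterm q, Fintype.sum_prod_type]
      have h1 : ∑ m, ∑ n, Complex.normSq (X m n) * p m = 1 := by
        have : ∀ m, ∑ n, Complex.normSq (X m n) * p m = p m := by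
          intro m
          rw [← Finset.sum_mul, sgnX_row ρ' hρ'H m, one_mul]
        rw [Finset.sum_congr rfl fun m _ => this m, hsum]
      have h2 : ∑ m, ∑ n, Complex.normSq (X m n) * p n = 1 := by
        rw [Finset.sum_comm]
        have : ∀ n, ∑ m, Complex.normSq (X m n) * p n = p n := by
          intro n
          rw [← Finset.sum_mul, sgnX_col ρ' hρ'H n, one_mul]
        rw [Finset.sum_congr rfl fun n _ => this n, hsum]
      calc ∑ m, ∑ n, Complex.normSq (X m n) * (p m + p n)
          = (∑ m, ∑ n, Complex.normSq (X m n) * p m)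
            + ∑ m, ∑ n, Complex.normSq (X m n) * p n := by
            rw [← Finset.sum_add_distrib]
            refine Finset.sum_congr rfl fun m _ => ?_
            rw [← Finset.sum_add_distrib]
            exact Finset.sum_congr rfl fun n _ => by ring
        _ = 2 := by rw [h1, h2]; norm_num
    have hv2 : ∑ q : Fin d × Fin d, v q ^ 2 = sldFisher p K / (2 * ℏ ^ 2) := by
      have hterm : ∀ q : Fin d × Fin d, v q ^ 2
          = 2 * (p q.1 - p q.2) ^ 2 / (p q.1 + p q.2)
            * Complex.normSq (K q.1 q.2) / (2 * ℏ ^ 2) := by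
        intro q
        rw [hv]
        simp only
        simp only [div_pow, mul_pow, sq_abs, Complex.sq_norm]
        rw [Real.sq_sqrt (hspos q).le, hKsym q.1 q.2]
        field_simp [(hspos q).ne', hℏ.ne']
      rw [Finset.sum_congr rfl fun q _ => hterm q]
      rw [← Finset.sum_div, Fintype.sum_prod_type]
      rfl
    calc ∑ q : Fin d × Fin d, u q * v q
        ≤ Real.sqrt (∑ q, u q ^ 2) * Real.sqrt (∑ q, v q ^ 2) :=
          sum_mul_le_sqrt_mul_sqrt u v
      _ = Real.sqrt (sldFisher p K) / ℏ := by
          rw [hu2, hv2, ← Real.sqrt_mul (by norm_num : (0:ℝ) ≤ 2)]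
          rw [show 2 * (sldFisher p K / (2 * ℏ ^ 2)) = sldFisher p K / ℏ ^ 2 by
            field_simp]
          rw [Real.sqrt_div hF, Real.sqrt_sq hℏ.le]
  -- bound 2
  have hXmm : ∀ m, ‖X m m‖ ≤ 1 := by
    intro m
    have hrow := sgnX_row ρ' hρ'H m
    have hle : Complex.normSq (X m m) ≤ 1 := by
      rw [← hrow]
      exact Finset.single_le_sum (fun n _ => Complex.normSq_nonneg _) (Finset.mem_univ m)
    nlinarith [Complex.sq_norm (X m m), norm_nonneg (X m m)]
  have htrD : (X * Dd).trace = ∑ m, X m m * ((Ddr m : ℝ) : ℂ) := by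
    simp only [Matrix.trace, Matrix.diag, hDddef, Matrix.mul_diagonal]
  have hσ : 0 ≤ σdot := sigma_nonneg p hp ι hι W hW
  have hM' : 0 ≤ M' := Mprime_nonneg p hp ι W hW
  have hb2 : ‖(X * Dd).trace‖
      ≤ Real.sqrt M' * Real.sqrt (2 * σdot) := by
    rw [htrD]
    have step1 : ‖∑ m, X m m * ((Ddr m : ℝ) : ℂ)‖ ≤ ∑ m, |Ddr m| := by
      refine (norm_sum_le _ _).trans ?_
      refine Finset.sum_le_sum fun m _ => ?_
      rw [norm_mul, Complex.norm_real, Real.norm_eq_abs]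
      calc ‖X m m‖ * |Ddr m| ≤ 1 * |Ddr m| :=
            mul_le_mul_of_nonneg_right (hXmm m) (abs_nonneg _)
        _ = |Ddr m| := one_mul _
    refine step1.trans ?_
    have step2 : ∑ m, |Ddr m|
        ≤ ∑ j, ∑ n, ∑ m, (if n = m then 0
            else |W j m n * p n - W (ι j) n m * p m|) := by
      have hmono : ∀ m, |Ddr m| ≤ ∑ j, ∑ n, (if n = m then 0
          else |W j m n * p n - W (ι j) n m * p m|) := by
        intro m
        rw [hDdr]
        simp only
        refine (Finset.abs_sum_le_sum_abs _ _).trans ?_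
        refine Finset.sum_le_sum fun j _ => ?_
        refine (Finset.abs_sum_le_sum_abs _ _).trans ?_
        refine Finset.sum_le_sum fun n _ => ?_
        split <;> simp
      refine (Finset.sum_le_sum fun m _ => hmono m).trans ?_
      rw [Finset.sum_comm]
      refine le_of_eq (Finset.sum_congr rfl fun j _ => ?_)
      rw [Finset.sum_comm]
    exact step2.trans (dissipative_bound p hp ι hι W hW)
  -- assemble
  rw [hLHS]
  have hchain : ∑ i, |hρ'H.eigenvalues i|
      ≤ Real.sqrt (sldFisher p K) / ℏ + Real.sqrt M' * Real.sqrt (2 * σdot) := by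
    rw [← htr, hsplit, Complex.add_re]
    calc ((X * (c • (K * ρ - ρ * K))).trace).re + ((X * Dd).trace).re
        ≤ ‖(X * (c • (K * ρ - ρ * K))).trace‖
          + ‖(X * Dd).trace‖ :=
          add_le_add (Complex.re_le_norm _) (Complex.re_le_norm _)
      _ ≤ _ := add_le_add hb1 hb2
  have h14 : Real.sqrt (1/4) = 1/2 := by
    rw [show (1/4 : ℝ) = (1/2)^2 by norm_num, Real.sqrt_sq (by norm_num)]
  have hhalf : (1 / 2 : ℝ) * (Real.sqrt M' * Real.sqrt (2 * σdot))
      = Real.sqrt ((1 / 2) * σdot * M') := by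
    calc (1 / 2 : ℝ) * (Real.sqrt M' * Real.sqrt (2 * σdot))
        = Real.sqrt (1/4) * Real.sqrt (M' * (2 * σdot)) := by
          rw [h14, Real.sqrt_mul hM']
      _ = Real.sqrt ((1/4) * (M' * (2 * σdot))) :=
          (Real.sqrt_mul (by norm_num) _).symm
      _ = Real.sqrt ((1 / 2) * σdot * M') := by
          congr 1
          ring
  calc (1 / 2) * ∑ i, |hρ'H.eigenvalues i|
      ≤ (1 / 2) * (Real.sqrt (sldFisher p K) / ℏ + Real.sqrt M' * Real.sqrt (2 * σdot)) :=
        mul_le_mul_of_nonneg_left hchain (by norm_num)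
    _ = (1 / (2 * ℏ)) * Real.sqrt (sldFisher p K) + Real.sqrt ((1/2) * σdot * M') := by
        rw [mul_add, hhalf]
        congr 1
        field_simp
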